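/- Let K > 0, λ ∈ ℝ, ξ ≠ 0. Let a : ℝ → (0,∞) be twice continuously differentiable satisfying the Emden equation a''(t) = −λ/a(t) + ξ²/a(t)³, and let f : [0,∞) → ℝ be twice continuously differentiable with f'(0) = 0 satisfying the Liouville equation f''(s) + f'(s)/s + (2π/K)·e^{f(s)} = 2λ/K for s > 0. Define, with r = √(x²+y²), ρ(t,x,y) = e^{f(r/a(t))}/a(t)², u₁ = (a'(t)/a(t))·x − (ξ/a(t)²)·y, u₂ = (ξ/a(t)²)·x + (a'(t)/a(t))·y. Then at every point with r > 0 the two momentum equations hold with isothermal pressure P = Kρ and radial gravitational force: ρ·(∂u₁/∂t + u₁·∂u₁/∂x + u₂·∂u₁/∂y) + ∂(Kρ)/∂x + ρ·(x/r²)·2π·∫₀ʳ ρ(t,η)·η dη = 0, and ρ·(∂u₂/∂t + u₁·∂u₂/∂x + u₂·∂u₂/∂y) + ∂(Kρ)/∂y + ρ·(y/r²)·2π·∫₀ʳ ρ(t,η)·η dη = 0. -/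

import Mathlib

open Real

/-- The planar radius `r = √(x² + y²)`. -/
noncomputable def rad (x y : ℝ) : ℝ := Real.sqrt (x ^ 2 + y ^ 2)

lemma key_identity (K lam : ℝ) (hK : 0 < K)
    (f f' f'' : ℝ → ℝ)
    (hfc : ContinuousOn f (Set.Ici 0))
    (hf'c : ContinuousOn f' (Set.Ici 0))
    (hfd : ∀ s ∈ Set.Ioi (0 : ℝ), HasDerivAt f (f' s) s)
    (hfd' : ∀ s ∈ Set.Ioi (0 : ℝ), HasDerivAt f' (f'' s) s)
    (hf'0 : f' 0 = 0)
    (hfode : ∀ s ∈ Set.Ioi (0 : ℝ),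
      f'' s + f' s / s + (2 * π / K) * Real.exp (f s) = 2 * lam / K) :
    ∀ s ∈ Set.Ioi (0 : ℝ),
      K * (s * f' s) + 2 * π * (∫ σ in (0:ℝ)..s, Real.exp (f σ) * σ) = lam * s ^ 2 := by
  intro s hs
  rw [Set.mem_Ioi] at hs
  set ft : ℝ → ℝ := fun σ => f (max σ 0) with hft
  set ft' : ℝ → ℝ := fun σ => f' (max σ 0) with hft'
  have hmaxc : Continuous (fun σ : ℝ => max σ 0) := continuous_id.max continuous_const
  have hmem : ∀ σ : ℝ, max σ 0 ∈ Set.Ici (0:ℝ) := fun σ => Set.mem_Ici.mpr (le_max_right _ _)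
  have hftc : Continuous ft := hfc.comp_continuous hmaxc hmem
  have hft'c : Continuous ft' := hf'c.comp_continuous hmaxc hmem
  set G : ℝ → ℝ := fun σ => Real.exp (ft σ) * σ with hG
  have hGc : Continuous G := (Real.continuous_exp.comp hftc).mul continuous_id
  set F : ℝ → ℝ := fun u => ∫ σ in (0:ℝ)..u, G σ with hF
  have hFd : ∀ b : ℝ, HasDerivAt F (G b) b := fun b =>
    intervalIntegral.integral_hasDerivAt_right (hGc.intervalIntegrable _ _)
      (hGc.stronglyMeasurableAtFilter _ _) hGc.continuousAt
  set h : ℝ → ℝ := fun σ => σ * ft' σ with hh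
  -- derivative of h at 0 is 0
  have hft'0 : Filter.Tendsto ft' (nhds 0) (nhds 0) := by
    have hmaxt : Filter.Tendsto (fun σ : ℝ => max σ 0) (nhds 0)
        (nhdsWithin 0 (Set.Ici 0)) := by
      rw [tendsto_nhdsWithin_iff]
      constructor
      · simpa using hmaxc.tendsto 0
      · exact Filter.Eventually.of_forall hmem
    have h2 : Filter.Tendsto f' (nhdsWithin 0 (Set.Ici 0)) (nhds (f' 0)) :=
      hf'c 0 Set.self_mem_Ici
    rw [hf'0] at h2
    exact h2.comp hmaxt
  have hh0 : HasDerivAt h 0 0 := by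
    rw [hasDerivAt_iff_tendsto_slope]
    refine ((hft'0.mono_left nhdsWithin_le_nhds)).congr' ?_
    filter_upwards [self_mem_nhdsWithin] with σ hσ
    have hσ' : σ ≠ 0 := hσ
    simp only [slope_def_field, hh]
    field_simp
    ring
  -- at positive points, h has derivative f' b + b f'' b
  have hhb : ∀ b : ℝ, 0 < b → HasDerivAt h (ft' b + b * f'' b) b := by
    intro b hb
    have heq : h =ᶠ[nhds b] fun σ => σ * f' σ := by
      filter_upwards [eventually_gt_nhds hb] with σ hσ
      simp [hh, hft', max_eq_left hσ.le]
    have : HasDerivAt (fun σ => σ * f' σ) (1 * f' b + b * f'' b) b :=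
      (hasDerivAt_id b).mul (hfd' b hb)
    have := this.congr_of_eventuallyEq heq
    simpa [hft', max_eq_left hb.le] using this
  set g : ℝ → ℝ := fun σ => K * h σ + 2 * π * F σ - lam * σ ^ 2 with hg
  have hgd : ∀ b ∈ Set.Ico (0:ℝ) s, HasDerivWithinAt g 0 (Set.Ici b) b := by
    intro b hb
    rcases eq_or_lt_of_le hb.1 with hb0 | hb0
    · subst hb0
      have : HasDerivAt g (K * 0 + 2 * π * G 0 - lam * (2 * 0 ^ 1)) 0 := by
        exact (((hh0.const_mul K).add ((hFd 0).const_mul (2 * π))).sub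
          ((hasDerivAt_pow 2 (0:ℝ)).const_mul lam))
      simpa [hG] using this.hasDerivWithinAt
    · have hode := hfode b hb0
      have hd : HasDerivAt g (K * (ft' b + b * f'' b) + 2 * π * G b - lam * (2 * b ^ 1)) b :=
        ((((hhb b hb0).const_mul K).add ((hFd b).const_mul (2 * π))).sub
          ((hasDerivAt_pow 2 b).const_mul lam))
      have hval : K * (ft' b + b * f'' b) + 2 * π * G b - lam * (2 * b ^ 1) = 0 := by
        simp only [hft', hG, hft, max_eq_left hb0.le]
        have hKne : K ≠ 0 := hK.ne'
        have hbne : b ≠ 0 := hb0.ne'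
        field_simp at hode
        nlinarith [hode]
      rw [hval] at hd
      exact hd.hasDerivWithinAt
  have hgc : ContinuousOn g (Set.Icc 0 s) := by
    apply Continuous.continuousOn
    exact ((continuous_const.mul ((continuous_id.mul hft'c))).add
      (continuous_const.mul (intervalIntegral.continuous_primitive
        (fun a b => hGc.intervalIntegrable a b) 0))).sub
      (continuous_const.mul (continuous_pow 2))
  have hconst := constant_of_has_deriv_right_zero hgc hgd s (Set.right_mem_Icc.mpr hs.le)
  have hg0 : g 0 = 0 := by simp [hg, hh, hF]
  rw [hg0] at hconst
  -- unpack
  have hfts : ft' s = f' s := by simp [hft', max_eq_left hs.le]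
  have hFs : F s = ∫ σ in (0:ℝ)..s, Real.exp (f σ) * σ := by
    apply intervalIntegral.integral_congr
    intro σ hσ
    rw [Set.uIcc_of_le hs.le] at hσ
    simp [hG, hft, max_eq_left hσ.1]
  have : K * (s * ft' s) + 2 * π * F s - lam * s ^ 2 = 0 := hconst
  rw [hfts, hFs] at this
  linarith

set_option maxHeartbeats 1600000 in
/-- With `a` a positive C² solution of the Emden equation
`a'' = −λ/a + ξ²/a³` and `f` a C² solution on `[0,∞)` of the Liouville equation
`f'' + f'/s + (2π/K)e^f = 2λ/K` with `f'(0) = 0`, the density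
`ρ(t,x,y) = e^{f(r/a(t))}/a(t)²` and velocity
`u₁ = (a'/a)x − (ξ/a²)y`, `u₂ = (ξ/a²)x + (a'/a)y` satisfy both momentum equations of the
2D isothermal Euler–Poisson system (pressure `P = Kρ`, radial self-gravity) wherever
`r > 0`. -/
theorem momentum_equations_rotational_solution
    (K lam ξ : ℝ) (hK : 0 < K) (hξ : ξ ≠ 0)
    (a : ℝ → ℝ) (hareg : ContDiff ℝ 2 a) (hapos : ∀ t, 0 < a t)
    (haode : ∀ t, deriv (deriv a) t = -lam / a t + ξ ^ 2 / (a t) ^ 3)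
    (f f' f'' : ℝ → ℝ)
    (hfc : ContinuousOn f (Set.Ici 0))
    (hf'c : ContinuousOn f' (Set.Ici 0))
    (hf''c : ContinuousOn f'' (Set.Ici 0))
    (hfd : ∀ s ∈ Set.Ioi (0 : ℝ), HasDerivAt f (f' s) s)
    (hfd' : ∀ s ∈ Set.Ioi (0 : ℝ), HasDerivAt f' (f'' s) s)
    (hf'0 : f' 0 = 0)
    (hfode : ∀ s ∈ Set.Ioi (0 : ℝ),
      f'' s + f' s / s + (2 * π / K) * Real.exp (f s) = 2 * lam / K)
    (ρrad : ℝ → ℝ → ℝ) (ρ u₁ u₂ : ℝ → ℝ → ℝ → ℝ)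
    (hρrad : ∀ t r, ρrad t r = Real.exp (f (r / a t)) / (a t) ^ 2)
    (hρ : ∀ t x y, ρ t x y = ρrad t (rad x y))
    (hu₁ : ∀ t x y, u₁ t x y = (deriv a t / a t) * x - (ξ / (a t) ^ 2) * y)
    (hu₂ : ∀ t x y, u₂ t x y = (ξ / (a t) ^ 2) * x + (deriv a t / a t) * y) :
    ∀ t x y, 0 < rad x y →
      (ρ t x y * (deriv (fun τ => u₁ τ x y) t
            + u₁ t x y * deriv (fun χ => u₁ t χ y) x
            + u₂ t x y * deriv (fun υ => u₁ t x υ) y)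
        + deriv (fun χ => K * ρ t χ y) x
        + ρ t x y * (x / (rad x y) ^ 2)
            * (2 * π * ∫ η in (0 : ℝ)..(rad x y), ρrad t η * η) = 0) ∧
      (ρ t x y * (deriv (fun τ => u₂ τ x y) t
            + u₁ t x y * deriv (fun χ => u₂ t χ y) x
            + u₂ t x y * deriv (fun υ => u₂ t x υ) y)
        + deriv (fun υ => K * ρ t x υ) y
        + ρ t x y * (y / (rad x y) ^ 2)
            * (2 * π * ∫ η in (0 : ℝ)..(rad x y), ρrad t η * η) = 0) := by
  intro t x y hr
  have h2 : ContDiff ℝ ((1:ℕ) + 1) a := by exact_mod_cast hareg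
  obtain ⟨hda, -, hda'c⟩ := contDiff_succ_iff_deriv.mp h2
  have hda' : Differentiable ℝ (deriv a) := hda'c.differentiable (by norm_num)
  have hA : 0 < a t := hapos t
  have hAne : a t ≠ 0 := hA.ne'
  have hd1 : HasDerivAt a (deriv a t) t := (hda t).hasDerivAt
  have hd2 : HasDerivAt (deriv a) (deriv (deriv a) t) t := (hda' t).hasDerivAt
  set r : ℝ := rad x y with hrdef
  set s : ℝ := r / a t with hsdef
  have hs : 0 < s := div_pos hr hA
  have hrne : r ≠ 0 := hr.ne'
  -- time derivatives
  have e1 : deriv (fun τ => u₁ τ x y) t =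
      ((deriv (deriv a) t * a t - deriv a t * deriv a t) / (a t) ^ 2) * x -
      ((0 * (a t) ^ 2 - ξ * (2 * a t ^ 1 * deriv a t)) / ((a t) ^ 2) ^ 2) * y := by
    rw [show (fun τ => u₁ τ x y) = fun τ => (deriv a τ / a τ) * x - (ξ / (a τ) ^ 2) * y from
      funext fun τ => hu₁ τ x y]
    exact (((hd2.div hd1 hAne).mul_const x).sub
      (((hasDerivAt_const t ξ).div (hd1.pow 2) (pow_ne_zero 2 hAne)).mul_const y)).deriv
  have e4 : deriv (fun τ => u₂ τ x y) t =
      ((0 * (a t) ^ 2 - ξ * (2 * a t ^ 1 * deriv a t)) / ((a t) ^ 2) ^ 2) * x +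
      ((deriv (deriv a) t * a t - deriv a t * deriv a t) / (a t) ^ 2) * y := by
    rw [show (fun τ => u₂ τ x y) = fun τ => (ξ / (a τ) ^ 2) * x + (deriv a τ / a τ) * y from
      funext fun τ => hu₂ τ x y]
    exact ((((hasDerivAt_const t ξ).div (hd1.pow 2) (pow_ne_zero 2 hAne)).mul_const x).add
      ((hd2.div hd1 hAne).mul_const y)).deriv
  -- spatial derivatives of velocities
  have e2 : deriv (fun χ => u₁ t χ y) x = deriv a t / a t * 1 := by
    rw [show (fun χ => u₁ t χ y) = fun χ => (deriv a t / a t) * χ - (ξ / (a t) ^ 2) * y from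
      funext fun χ => hu₁ t χ y]
    exact (((hasDerivAt_id x).const_mul _).sub_const _).deriv
  have e3 : deriv (fun υ => u₁ t x υ) y = 0 - ξ / (a t) ^ 2 * 1 := by
    rw [show (fun υ => u₁ t x υ) = fun υ => (deriv a t / a t) * x - (ξ / (a t) ^ 2) * υ from
      funext fun υ => hu₁ t x υ]
    exact ((hasDerivAt_const y _).sub ((hasDerivAt_id y).const_mul _)).deriv
  have e5 : deriv (fun χ => u₂ t χ y) x = ξ / (a t) ^ 2 * 1 := by
    rw [show (fun χ => u₂ t χ y) = fun χ => (ξ / (a t) ^ 2) * χ + (deriv a t / a t) * y from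
      funext fun χ => hu₂ t χ y]
    exact (((hasDerivAt_id x).const_mul _).add_const _).deriv
  have e6 : deriv (fun υ => u₂ t x υ) y = 0 + deriv a t / a t * 1 := by
    rw [show (fun υ => u₂ t x υ) = fun υ => (ξ / (a t) ^ 2) * x + (deriv a t / a t) * υ from
      funext fun υ => hu₂ t x υ]
    exact ((hasDerivAt_const y _).add ((hasDerivAt_id y).const_mul _)).deriv
  -- radial derivative facts
  have hx2y2 : (0:ℝ) < x ^ 2 + y ^ 2 := by
    by_contra h
    push_neg at h
    have : r = 0 := by
      rw [hrdef]
      unfold rad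
      exact Real.sqrt_eq_zero'.mpr h
    exact hrne this
  have hradx : HasDerivAt (fun χ => rad χ y) (x / r) x := by
    have hin : HasDerivAt (fun χ : ℝ => χ ^ 2 + y ^ 2) (2 * x) x := by
      simpa using (hasDerivAt_pow 2 x).add_const (y ^ 2)
    have hsq := (Real.hasDerivAt_sqrt hx2y2.ne').comp x hin
    have : (1 / (2 * Real.sqrt (x ^ 2 + y ^ 2))) * (2 * x) = x / r := by
      rw [hrdef]; unfold rad
      have : Real.sqrt (x ^ 2 + y ^ 2) ≠ 0 := by
        rw [hrdef] at hrne; unfold rad at hrne; exact hrne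
      field_simp
    rw [this] at hsq
    exact hsq
  have hrady : HasDerivAt (fun υ => rad x υ) (y / r) y := by
    have hin : HasDerivAt (fun υ : ℝ => x ^ 2 + υ ^ 2) (2 * y) y := by
      simpa using (hasDerivAt_pow 2 y).const_add (x ^ 2)
    have hsq := (Real.hasDerivAt_sqrt hx2y2.ne').comp y hin
    have : (1 / (2 * Real.sqrt (x ^ 2 + y ^ 2))) * (2 * y) = y / r := by
      rw [hrdef]; unfold rad
      have : Real.sqrt (x ^ 2 + y ^ 2) ≠ 0 := by
        rw [hrdef] at hrne; unfold rad at hrne; exact hrne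
      field_simp
    rw [this] at hsq
    exact hsq
  -- pressure derivatives
  have e7 : deriv (fun χ => K * ρ t χ y) x =
      K * (Real.exp (f s) * (f' s * (x / r / a t)) / (a t) ^ 2) := by
    rw [show (fun χ => K * ρ t χ y) =
        fun χ => K * (Real.exp (f (rad χ y / a t)) / (a t) ^ 2) from
      funext fun χ => by rw [hρ, hρrad]]
    have h1 : HasDerivAt (fun χ => rad χ y / a t) (x / r / a t) x := hradx.div_const _
    have h2' : HasDerivAt (fun χ => f (rad χ y / a t)) (f' s * (x / r / a t)) x :=
      (hfd s hs).comp x h1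
    exact (((h2'.exp).div_const _).const_mul K).deriv
  have e8 : deriv (fun υ => K * ρ t x υ) y =
      K * (Real.exp (f s) * (f' s * (y / r / a t)) / (a t) ^ 2) := by
    rw [show (fun υ => K * ρ t x υ) =
        fun υ => K * (Real.exp (f (rad x υ / a t)) / (a t) ^ 2) from
      funext fun υ => by rw [hρ, hρrad]]
    have h1 : HasDerivAt (fun υ => rad x υ / a t) (y / r / a t) y := hrady.div_const _
    have h2' : HasDerivAt (fun υ => f (rad x υ / a t)) (f' s * (y / r / a t)) y :=
      (hfd s hs).comp y h1
    exact (((h2'.exp).div_const _).const_mul K).deriv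
  -- the integral substitution
  have hint : (∫ η in (0:ℝ)..r, ρrad t η * η) = ∫ σ in (0:ℝ)..s, Real.exp (f σ) * σ := by
    have h1 : ∀ η : ℝ, ρrad t η * η = (a t)⁻¹ * (Real.exp (f (η / a t)) * (η / a t)) := by
      intro η; rw [hρrad]; field_simp
    simp only [h1]
    rw [intervalIntegral.integral_const_mul]
    have hcd : (∫ η in (0:ℝ)..r, Real.exp (f (η / a t)) * (η / a t)) =
        a t • ∫ σ in (0:ℝ) / a t..r / a t, Real.exp (f σ) * σ :=
      intervalIntegral.integral_comp_div (f := fun σ => Real.exp (f σ) * σ) hAne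
    rw [hcd, smul_eq_mul, zero_div, ← hsdef]
    field_simp
  -- key identity
  have key : K * (s * f' s) + 2 * π * (∫ σ in (0:ℝ)..s, Real.exp (f σ) * σ) = lam * s ^ 2 :=
    key_identity K lam hK f f' f'' hfc hf'c hfd hfd' hf'0 hfode s hs
  have hkey' : 2 * π * (∫ σ in (0:ℝ)..s, Real.exp (f σ) * σ) =
      lam * s ^ 2 - K * (s * f' s) := by linarith
  have hA'' := haode t
  constructor
  · rw [e1, e2, e3, e7, hint]
    simp only [hρ, hρrad, hu₁, hu₂]
    rw [← hrdef, ← hsdef, hA'', hkey', hsdef]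
    field_simp
    ring
  · rw [e4, e5, e6, e8, hint]
    simp only [hρ, hρrad, hu₁, hu₂]
    rw [← hrdef, ← hsdef, hA'', hkey', hsdef]
    field_simp
    ring
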